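/- Fix an integer ℓ ≥ 2, and let A : ℝ² → Matrix (Fin 3) (Fin 3) ℝ be the symmetric matrix-valued map with rows (x₁, x₂^ℓ, 0), (x₂^ℓ, x₁, 0), (0, 0, x₂). Suppose Φ : ℝ² → ℝ² is smooth on a neighborhood of 0 with Φ(0) = 0 and fderiv ℝ Φ 0 invertible, and X : ℝ² → Matrix (Fin 3) (Fin 3) ℝ is smooth on that neighborhood with X x invertible there, such that A(Φ x) = (X x)ᵀ * A x * (X x) for all x in the neighborhood. Then det (fderiv ℝ Φ 0) > 0, i.e., Φ preserves the orientation of ℝ². -/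

import Mathlib

attribute [local instance] Matrix.normedAddCommGroup Matrix.normedSpace

open scoped Matrix
open Filter

/-- For the `3 × 3` family `A(x₁,x₂)` with rows `(x₁, x₂^ℓ, 0)`, `(x₂^ℓ, x₁, 0)`, `(0, 0, x₂)`
(`ℓ ≥ 2`), any diffeomorphism-germ `Φ` at `0` in the isotropy group `𝒟_A` (i.e. with
`A ∘ Φ = Xᵀ A X` near `0` for an invertible-matrix-valued `X`) preserves the orientation
of `ℝ²`. -/
theorem isotropy_orientation_preserving_sym3_class5 (ℓ : ℕ) (hℓ : 2 ≤ ℓ)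
    (A : ℝ × ℝ → Matrix (Fin 3) (Fin 3) ℝ)
    (hA : A = fun p => !![p.1, p.2 ^ ℓ, 0; p.2 ^ ℓ, p.1, 0; 0, 0, p.2])
    (Φ : ℝ × ℝ → ℝ × ℝ) (X : ℝ × ℝ → Matrix (Fin 3) (Fin 3) ℝ)
    (s : Set (ℝ × ℝ)) (hs : s ∈ nhds (0 : ℝ × ℝ))
    (hΦ : ContDiffOn ℝ (⊤ : ℕ∞) Φ s) (hΦ0 : Φ 0 = 0)
    (hdΦ : IsUnit (fderiv ℝ Φ 0))
    (hX : ContDiffOn ℝ (⊤ : ℕ∞) X s) (hXinv : ∀ x ∈ s, IsUnit (X x))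
    (heq : ∀ x ∈ s, A (Φ x) = (X x)ᵀ * A x * X x) :
    0 < LinearMap.det ((fderiv ℝ Φ 0) : (ℝ × ℝ) →ₗ[ℝ] (ℝ × ℝ)) := by
  set L := fderiv ℝ Φ 0 with hLdef
  have h0s : (0 : ℝ × ℝ) ∈ s := mem_of_mem_nhds hs
  have hΦd : HasFDerivAt Φ L 0 :=
    ((hΦ.contDiffAt hs).differentiableAt (by simp)).hasFDerivAt
  -- ray limits
  have key : ∀ v : ℝ × ℝ, Tendsto (fun t : ℝ => t⁻¹ • Φ (t • v))
      (nhdsWithin 0 {(0:ℝ)}ᶜ) (nhds (L v)) := by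
    intro v
    have hg : HasDerivAt (fun t : ℝ => t • v) v 0 := by
      simpa using (hasDerivAt_id (0:ℝ)).smul_const v
    have hc : HasDerivAt (fun t : ℝ => Φ (t • v)) (L v) 0 :=
      HasFDerivAt.comp_hasDerivAt 0 (by simpa using hΦd) hg
    rw [hasDerivAt_iff_tendsto_slope] at hc
    refine hc.congr fun t => ?_
    simp [slope, hΦ0]
  -- determinant of A
  have hdetA : ∀ p : ℝ × ℝ, (A p).det = (p.1^2 - p.2^(2*ℓ)) * p.2 := by
    intro p
    rw [hA]
    simp [Matrix.det_fin_three]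
    ring
  -- scalar identity
  have hsc : ∀ x ∈ s, ((Φ x).1^2 - (Φ x).2^(2*ℓ)) * (Φ x).2
      = ((X x).det)^2 * ((x.1^2 - x.2^(2*ℓ)) * x.2) := by
    intro x hx
    have h := congrArg Matrix.det (heq x hx)
    rw [Matrix.det_mul, Matrix.det_mul, Matrix.det_transpose, hdetA, hdetA] at h
    rw [h]; ring
  set u₀ : ℝ := ((X 0).det)^2 with hu₀def
  have hu₀ : 0 < u₀ := by
    have hdet : (X 0).det ≠ 0 := by
      have := (Matrix.isUnit_iff_isUnit_det _).mp (hXinv 0 h0s)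
      exact this.ne_zero
    positivity
  -- eventually membership
  have hmem : ∀ v : ℝ × ℝ, ∀ᶠ t in nhds (0:ℝ), t • v ∈ s := by
    intro v
    have hcont : Tendsto (fun t : ℝ => t • v) (nhds 0) (nhds (0 : ℝ × ℝ)) := by
      have : Continuous (fun t : ℝ => t • v) := continuous_id.smul continuous_const
      simpa using this.tendsto 0
    exact hcont hs
  -- the key polynomial relation
  have star : ∀ v : ℝ × ℝ, ((L v).1)^2 * (L v).2 = u₀ * (v.1^2 * v.2) := by
    intro v
    have hF := key v
    have hF1 : Tendsto (fun t : ℝ => (t⁻¹ • Φ (t • v)).1)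
        (nhdsWithin 0 {(0:ℝ)}ᶜ) (nhds (L v).1) := (continuous_fst.tendsto _).comp hF
    have hF2 : Tendsto (fun t : ℝ => (t⁻¹ • Φ (t • v)).2)
        (nhdsWithin 0 {(0:ℝ)}ᶜ) (nhds (L v).2) := (continuous_snd.tendsto _).comp hF
    have hpow : Tendsto (fun t : ℝ => t^(2*ℓ-2)) (nhdsWithin 0 {(0:ℝ)}ᶜ) (nhds 0) := by
      have h1 : Tendsto (fun t : ℝ => t^(2*ℓ-2)) (nhds 0) (nhds ((0:ℝ)^(2*ℓ-2))) :=
        (continuous_pow _).tendsto 0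
      rw [zero_pow (by omega : 2*ℓ-2 ≠ 0)] at h1
      exact h1.mono_left nhdsWithin_le_nhds
    have hXc : Tendsto (fun t : ℝ => ((X (t • v)).det)^2) (nhdsWithin 0 {(0:ℝ)}ᶜ) (nhds u₀) := by
      have hXat : ContinuousAt X 0 := (hX.contDiffAt hs).continuousAt
      have hsm : Tendsto (fun t : ℝ => t • v) (nhds 0) (nhds (0 : ℝ × ℝ)) := by
        have : Continuous (fun t : ℝ => t • v) := continuous_id.smul continuous_const
        simpa using this.tendsto 0
      have : Tendsto (fun t : ℝ => ((X (t • v)).det)^2) (nhds 0) (nhds u₀) := by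
        exact ((Continuous.matrix_det continuous_id).continuousAt.tendsto.comp
          (hXat.tendsto.comp hsm)).pow 2
      exact this.mono_left nhdsWithin_le_nhds
    have hG : Tendsto (fun t : ℝ => ((t⁻¹ • Φ (t • v)).1)^2 * ((t⁻¹ • Φ (t • v)).2)
          - ((t⁻¹ • Φ (t • v)).2)^(2*ℓ+1) * t^(2*ℓ-2))
        (nhdsWithin 0 {(0:ℝ)}ᶜ) (nhds (((L v).1)^2 * (L v).2)) := by
      have := ((hF1.pow 2).mul hF2).sub ((hF2.pow (2*ℓ+1)).mul hpow)
      simpa using this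
    have hH : Tendsto (fun t : ℝ => ((X (t • v)).det)^2 * ((v.1^2 - t^(2*ℓ-2) * v.2^(2*ℓ)) * v.2))
        (nhdsWithin 0 {(0:ℝ)}ᶜ) (nhds (u₀ * (v.1^2 * v.2))) := by
      have h2 : Tendsto (fun t : ℝ => (v.1^2 - t^(2*ℓ-2) * v.2^(2*ℓ)) * v.2)
          (nhdsWithin 0 {(0:ℝ)}ᶜ) (nhds (v.1^2 * v.2)) := by
        have hc1 : Tendsto (fun _ : ℝ => v.1^2) (nhdsWithin 0 {(0:ℝ)}ᶜ) (nhds (v.1^2)) :=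
          tendsto_const_nhds
        have hc2 : Tendsto (fun _ : ℝ => v.2^(2*ℓ)) (nhdsWithin 0 {(0:ℝ)}ᶜ) (nhds (v.2^(2*ℓ))) :=
          tendsto_const_nhds
        have hc3 : Tendsto (fun _ : ℝ => v.2) (nhdsWithin 0 {(0:ℝ)}ᶜ) (nhds v.2) :=
          tendsto_const_nhds
        have := (hc1.sub (hpow.mul hc2)).mul hc3
        simpa using this
      exact hXc.mul h2
    have hev : (fun t : ℝ => ((t⁻¹ • Φ (t • v)).1)^2 * ((t⁻¹ • Φ (t • v)).2)
          - ((t⁻¹ • Φ (t • v)).2)^(2*ℓ+1) * t^(2*ℓ-2))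
        =ᶠ[nhdsWithin 0 {(0:ℝ)}ᶜ]
        (fun t : ℝ => ((X (t • v)).det)^2 * ((v.1^2 - t^(2*ℓ-2) * v.2^(2*ℓ)) * v.2)) := by
      filter_upwards [(hmem v).filter_mono nhdsWithin_le_nhds, eventually_mem_nhdsWithin]
        with t hts htne
      have ht : t ≠ 0 := htne
      have h := hsc (t • v) hts
      have h1 : (t • v).1 = t * v.1 := rfl
      have h2 : (t • v).2 = t * v.2 := rfl
      rw [h1, h2] at h
      have hs1 : (t⁻¹ • Φ (t • v)).1 = t⁻¹ * (Φ (t • v)).1 := rfl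
      have hs2 : (t⁻¹ • Φ (t • v)).2 = t⁻¹ * (Φ (t • v)).2 := rfl
      rw [hs1, hs2]
      obtain ⟨k, rfl⟩ : ∃ k, ℓ = k + 2 := ⟨ℓ - 2, by omega⟩
      have e1 : 2*(k+2)-2 = 2*k+2 := by omega
      have e2 : 2*(k+2)+1 = 2*k+5 := by omega
      have e3 : 2*(k+2) = 2*k+4 := by omega
      rw [e1, e2, e3]
      rw [e3] at h
      apply mul_left_cancel₀ (pow_ne_zero 3 ht)
      simp only [mul_pow, inv_pow]
      field_simp
      linear_combination (t^(2*k+5)) * h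
    exact tendsto_nhds_unique (hG.congr' hev) hH
  -- components of L
  set a : ℝ := (L (1,0)).1 with hadef
  set c : ℝ := (L (1,0)).2 with hcdef
  set b : ℝ := (L (0,1)).1 with hbdef
  set d : ℝ := (L (0,1)).2 with hddef
  have h1 : a^2 * c = 0 := by simpa using star (1,0)
  have h2 : b^2 * d = 0 := by simpa using star (0,1)
  have h3 : (a+b)^2 * (c+d) = u₀ := by
    have hsum : L ((1:ℝ),(1:ℝ)) = L (1,0) + L (0,1) := by
      rw [← map_add]; norm_num
    have hst := star (1,1)
    rw [hsum] at hst
    simp only [Prod.fst_add, Prod.snd_add] at hst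
    linear_combination hst
  have h4 : (a-b)^2 * (c-d) = -u₀ := by
    have hsub : L ((1:ℝ),(-1:ℝ)) = L (1,0) - L (0,1) := by
      rw [← map_sub]; norm_num
    have hst := star (1,-1)
    rw [hsub] at hst
    simp only [Prod.fst_sub, Prod.snd_sub] at hst
    linear_combination hst
  -- determinant of L as a linear map
  have hdetL : LinearMap.det ((L : (ℝ × ℝ) →L[ℝ] (ℝ × ℝ)) : (ℝ × ℝ) →ₗ[ℝ] (ℝ × ℝ)) = a*d - b*c := by
    have hrep : ((L : (ℝ × ℝ) →L[ℝ] (ℝ × ℝ)) : (ℝ × ℝ) →ₗ[ℝ] (ℝ × ℝ))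
        = Matrix.toLin (Module.Basis.finTwoProd ℝ) (Module.Basis.finTwoProd ℝ) !![a,b;c,d] := by
      apply (Module.Basis.finTwoProd ℝ).ext
      intro i
      fin_cases i <;>
        simp [Matrix.toLin_self, Fin.sum_univ_two, Module.Basis.finTwoProd_zero, Module.Basis.finTwoProd_one,
          Prod.ext_iff, hadef, hbdef, hcdef, hddef]
    rw [hrep, LinearMap.det_toLin, Matrix.det_fin_two_of]
  rw [hdetL]
  -- invertibility
  have hne : a*d - b*c ≠ 0 := by
    rw [← hdetL]
    obtain ⟨u, hu⟩ := hdΦ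
    have hmul : (↑u * ↑u⁻¹ : (ℝ × ℝ) →L[ℝ] (ℝ × ℝ)) = 1 := u.mul_inv
    have hdets : LinearMap.det (((↑u * ↑u⁻¹ : (ℝ × ℝ) →L[ℝ] (ℝ × ℝ))) : (ℝ × ℝ) →ₗ[ℝ] (ℝ × ℝ)) = 1 := by
      rw [hmul]
      simp [ContinuousLinearMap.one_def]
    rw [ContinuousLinearMap.mul_def, ContinuousLinearMap.toLinearMap_comp, LinearMap.det_comp, hu] at hdets
    intro h0
    rw [h0, zero_mul] at hdets
    exact zero_ne_one hdets
  -- PSD argument: a ≥ 0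
  have hapos : 0 ≤ a := by
    have hT : Tendsto (fun t : ℝ => (t⁻¹ • Φ (t • ((1:ℝ),(0:ℝ)))).1)
        (nhdsWithin 0 (Set.Ioi 0)) (nhds a) := by
      have := (continuous_fst.tendsto _).comp (key (1,0))
      exact this.mono_left (nhdsWithin_mono 0 (fun x hx => ne_of_gt hx))
    refine ge_of_tendsto hT ?_
    have hmem' := (hmem ((1:ℝ),(0:ℝ))).filter_mono (nhdsWithin_le_nhds (s := Set.Ioi 0))
    filter_upwards [hmem', eventually_mem_nhdsWithin] with t hts (htpos : t ∈ Set.Ioi 0)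
    have htpos' : (0:ℝ) < t := htpos
    have hAtv : (t • ((1:ℝ),(0:ℝ)) : ℝ × ℝ) = (t, 0) := by norm_num
    rw [hAtv] at hts
    -- A (t,0) is PSD
    have hpsd0 : (A (t,0)).PosSemidef := by
      have hAe : A (t,0) = Matrix.diagonal ![t,t,0] := by
        rw [hA]
        ext i j
        fin_cases i <;> fin_cases j <;>
          simp [Matrix.diagonal, zero_pow (by omega : ℓ ≠ 0), Matrix.vecHead, Matrix.vecTail]
      rw [hAe]
      refine Matrix.posSemidef_diagonal_iff.mpr fun i => ?_
      fin_cases i <;> simp [le_of_lt htpos']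
    have hpsd : (A (Φ (t,0))).PosSemidef := by
      rw [heq _ hts]
      have hcongr := hpsd0.conjTranspose_mul_mul_same (X (t,0))
      rwa [Matrix.conjTranspose_eq_transpose_of_trivial] at hcongr
    have h00 : 0 ≤ (A (Φ (t,0))) 0 0 := by
      have hq := hpsd.dotProduct_mulVec_nonneg (Pi.single 0 1)
      simpa [Matrix.mulVec, dotProduct, Fin.sum_univ_three, Pi.single] using hq
    have hA00 : (A (Φ (t,0))) 0 0 = (Φ (t,0)).1 := by rw [hA]; simp
    rw [hA00] at h00
    have hfin : (t⁻¹ • Φ (t • ((1:ℝ),(0:ℝ)))).1 = t⁻¹ * (Φ (t,0)).1 := by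
      rw [hAtv]
      exact rfl
    rw [hfin]
    positivity
  -- final algebra
  rcases mul_eq_zero.mp h1 with ha | hc0
  · exfalso
    have ha0 : a = 0 := by
      have := pow_eq_zero_iff (n := 2) (by norm_num) |>.mp ha
      exact this
    rw [ha0] at h3 h4
    nlinarith [h2, h3, h4, hu₀]
  · rcases mul_eq_zero.mp h2 with hb | hd0
    · have hb0 : b = 0 := pow_eq_zero_iff (n := 2) (by norm_num) |>.mp hb
      rw [hb0, hc0] at h3 ⊢
      rw [hc0, hb0] at hne
      have hane : a ≠ 0 := by
        intro h0; rw [h0] at h3; simp at h3; rw [← h3] at hu₀; simp at hu₀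
      have hdpos : 0 < d := by nlinarith [sq_nonneg a, hu₀, h3]
      have hagt : 0 < a := lt_of_le_of_ne hapos (Ne.symm hane)
      nlinarith
    · exfalso
      rw [hc0, hd0] at hne
      simp at hne
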